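/- For any integers d ≥ 1, ℓ ≥ 2, Δ ≥ d and any d-degenerate graph G of maximum degree at most Δ, the ℓ-th power graph G^ℓ has an orientation in which every vertex has out-degree at most 2^{ℓ+1}·d^{⌈ℓ/2⌉}·Δ^{⌊ℓ/2⌋}. -/

import Mathlib

open Finset

/-- `G` is `d`-degenerate. -/
def IsDegenerate {V : Type*} (G : SimpleGraph V) (d : ℕ) : Prop :=
  ∀ s : Set V, s.Nonempty →
    ∃ v ∈ s, (s ∩ G.neighborSet v).Finite ∧ (s ∩ G.neighborSet v).ncard ≤ d

/-- `G` has maximum degree at most `Δ`. -/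
def MaxDegreeLE {V : Type*} (G : SimpleGraph V) (Δ : ℕ) : Prop :=
  ∀ v, (G.neighborSet v).Finite ∧ (G.neighborSet v).ncard ≤ Δ

/-- The power graph `G^ℓ`: two distinct vertices are adjacent iff some path of `G` with at
most `ℓ` edges contains both of them. -/
def powerGraph {V : Type*} (G : SimpleGraph V) (ℓ : ℕ) : SimpleGraph V where
  Adj v w := v ≠ w ∧ ∃ (a b : V) (p : G.Walk a b),
    p.IsPath ∧ p.length ≤ ℓ ∧ v ∈ p.support ∧ w ∈ p.support
  symm := by
    constructor
    rintro v w ⟨hne, a, b, p, hp, hl, hv, hw⟩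
    exact ⟨hne.symm, a, b, p, hp, hl, hw, hv⟩
  loopless := by
    constructor
    rintro v ⟨hne, -⟩
    exact hne rfl

section Aux

variable {V : Type*} {G : SimpleGraph V}

/-- Number of "down" steps of a walk with respect to a rank function `r`. -/
def dnCount (r : V → ℕ) {a b : V} (p : G.Walk a b) : ℕ :=
  p.darts.countP (fun e => decide (r e.snd < r e.fst))

@[simp] lemma dnCount_nil (r : V → ℕ) (a : V) : dnCount r (SimpleGraph.Walk.nil : G.Walk a a) = 0 :=
  rfl

lemma dnCount_cons (r : V → ℕ) {a b c : V} (h : G.Adj a b) (p : G.Walk b c) :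
    dnCount r (SimpleGraph.Walk.cons h p) =
      dnCount r p + (if r b < r a then 1 else 0) := by
  simp [dnCount, List.countP_cons]

lemma dnCount_add_reverse (r : V → ℕ) (hr : Function.Injective r) {a b : V} (p : G.Walk a b) :
    dnCount r p + dnCount r p.reverse = p.length := by
  have hrev : dnCount r p.reverse =
      p.darts.countP (fun e => decide (r e.fst < r e.snd)) := by
    rw [dnCount, SimpleGraph.Walk.darts_reverse, List.countP_reverse, List.countP_map]
    rfl
  rw [hrev, ← SimpleGraph.Walk.length_darts, p.darts.length_eq_countP_add_countP
    (fun e => decide (r e.snd < r e.fst))]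
  congr 1
  refine List.countP_congr fun e _ => ?_
  have hne : r e.fst ≠ r e.snd := fun h => e.adj.ne (hr h)
  simp only [Function.comp, decide_eq_true_eq, Bool.not_eq_true', decide_eq_false_iff_not]
  omega

lemma exists_walk_of_adj {ℓ : ℕ} {v w : V} (h : (powerGraph G ℓ).Adj v w) :
    ∃ q : G.Walk v w, q.length ≤ ℓ := by
  classical
  obtain ⟨hne, a, b, p, hp, hl, hv, hw⟩ := h
  by_cases hv' : v ∈ (p.takeUntil w hw).support
  · exact ⟨(p.takeUntil w hw).dropUntil v hv',
      le_trans (le_trans ((p.takeUntil w hw).length_dropUntil_le hv')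
        (p.length_takeUntil_le hw)) hl⟩
  · have hv2 : v ∈ (p.dropUntil w hw).support := by
      have h2 := hv
      rw [← p.take_spec hw, SimpleGraph.Walk.mem_support_append_iff] at h2
      tauto
    refine ⟨((p.dropUntil w hw).takeUntil v hv2).reverse, ?_⟩
    rw [SimpleGraph.Walk.length_reverse]
    exact le_trans (le_trans ((p.dropUntil w hw).length_takeUntil_le hv2)
      (p.length_dropUntil_le hw)) hl

/-- Existence of a degeneracy ordering, auxiliary version on a finite set. -/
lemma exists_rank_aux {d : ℕ} (hdeg : IsDegenerate G d) :
    ∀ n (s : Set V), s.Finite → s.ncard = n →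
      ∃ r : V → ℕ, Set.InjOn r s ∧
        ∀ v ∈ s, (s ∩ {w | G.Adj v w ∧ r v < r w}).ncard ≤ d := by
  classical
  intro n
  induction n using Nat.strong_induction_on with
  | _ n ih =>
    intro s hs hn
    rcases s.eq_empty_or_nonempty with rfl | hne
    · exact ⟨fun _ => 0, fun x hx => absurd hx (by simp), fun v hv => absurd hv (by simp)⟩
    · obtain ⟨v, hv, hfin, hcard⟩ := hdeg s hne
      set s' := s \ {v} with hs'
      have hlt : s'.ncard < n := hn ▸ Set.ncard_diff_singleton_lt_of_mem hv hs
      obtain ⟨r', hinj', hbound'⟩ := ih s'.ncard hlt s' hs.diff rfl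
      refine ⟨fun w => if w = v then 0 else r' w + 1, ?_, ?_⟩
      · intro x hx y hy hxy
        dsimp only at hxy
        by_cases hxv : x = v <;> by_cases hyv : y = v
        · rw [hxv, hyv]
        · rw [if_pos hxv, if_neg hyv] at hxy; omega
        · rw [if_neg hxv, if_pos hyv] at hxy; omega
        · rw [if_neg hxv, if_neg hyv] at hxy
          exact hinj' ⟨hx, hxv⟩ ⟨hy, hyv⟩ (by omega)
      · intro u hu
        by_cases huv : u = v
        · subst huv
          refine le_trans (Set.ncard_le_ncard ?_ hfin) hcard
          rintro w ⟨hws, hadj, -⟩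
          exact ⟨hws, hadj⟩
        · refine le_trans (Set.ncard_le_ncard ?_ (hs.diff.inter_of_left _)) (hbound' u ⟨hu, huv⟩)
          rintro w ⟨hws, hadj, hlt'⟩
          dsimp only at hlt'
          rw [if_neg huv] at hlt'
          have hwv : w ≠ v := by
            intro hwv
            rw [hwv, if_pos rfl] at hlt'
            omega
          rw [if_neg hwv] at hlt'
          exact ⟨⟨hws, hwv⟩, hadj, by omega⟩

lemma exists_rank [Fintype V] {d : ℕ} (hdeg : IsDegenerate G d) :
    ∃ r : V → ℕ, Function.Injective r ∧
      ∀ v, {w | G.Adj v w ∧ r v < r w}.ncard ≤ d := by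
  obtain ⟨r, hinj, hb⟩ := exists_rank_aux hdeg (Set.univ : Set V).ncard Set.univ (Set.toFinite _) rfl
  refine ⟨r, fun a b h => hinj trivial trivial h, fun v => ?_⟩
  simpa using hb v trivial

lemma ncard_biUnion_le {α β : Type*} [Fintype β] {s : Set α} (hs : s.Finite) (f : α → Set β)
    {m : ℕ} (hf : ∀ a ∈ s, (f a).ncard ≤ m) : (⋃ a ∈ s, f a).ncard ≤ s.ncard * m := by
  revert hf
  refine Set.Finite.induction_on s hs ?_ ?_
  · intro _
    simp
  · intro a t ha htf ih hf
    rw [Set.biUnion_insert]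
    refine le_trans (Set.ncard_union_le _ _) ?_
    rw [Set.ncard_insert_of_notMem ha htf]
    have h1 := ih (fun b hb => hf b (Set.mem_insert_of_mem _ hb))
    have h2 := hf a (Set.mem_insert _ _)
    nlinarith
  
lemma ncard_iUnion_range_le {β : Type*} [Fintype β] (f : ℕ → Set β) (n : ℕ) :
    (⋃ k ∈ Finset.range n, f k).ncard ≤ ∑ k ∈ Finset.range n, (f k).ncard := by
  induction n with
  | zero => simp
  | succ n ihn =>
    rw [Finset.range_add_one]
    simp only [Finset.mem_insert, Set.iUnion_iUnion_eq_or_left, Finset.sum_insert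
      Finset.notMem_range_self]
    exact le_trans (Set.ncard_union_le _ _) (by omega)

/-- The set of endpoints of walks from `v` of length `k` with `j` down-steps. -/
def reachSet (G : SimpleGraph V) (r : V → ℕ) (v : V) (k j : ℕ) : Set V :=
  {w | ∃ p : G.Walk v w, p.length = k ∧ dnCount r p = j}

lemma card_reachSet [Fintype V] {d Δ : ℕ} (r : V → ℕ) (hr : Function.Injective r)
    (hup : ∀ v, {w | G.Adj v w ∧ r v < r w}.ncard ≤ d)
    (hdn : ∀ v, {w | G.Adj v w ∧ r w < r v}.ncard ≤ Δ) :
    ∀ k j v, (reachSet G r v k j).ncard ≤ k.choose j * (d ^ (k - j) * Δ ^ j) := by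
  intro k
  induction k with
  | zero =>
    intro j v
    rcases Nat.eq_zero_or_pos j with rfl | hj
    · refine le_trans (Set.ncard_le_ncard (t := {v}) ?_ (Set.toFinite _)) (by simp)
      rintro w ⟨p, hp0, -⟩
      have := SimpleGraph.Walk.eq_of_length_eq_zero hp0
      simp [this]
    · have : reachSet G r v 0 j = ∅ := by
        ext w
        simp only [reachSet, Set.mem_setOf_eq, Set.mem_empty_iff_false, iff_false]
        rintro ⟨p, hp0, hpj⟩
        cases p with
        | nil => simp [dnCount_nil] at hpj; omega
        | cons h q => simp at hp0
      rw [this]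
      simp
  | succ k ihk =>
    intro j v
    rcases Nat.eq_zero_or_pos j with rfl | hj
    · -- all first steps must be up
      have hsub : reachSet G r v (k + 1) 0 ⊆
          ⋃ u ∈ {w | G.Adj v w ∧ r v < r w}, reachSet G r u k 0 := by
        rintro w ⟨p, hpl, hpd⟩
        cases p with
        | nil => simp at hpl
        | cons h q =>
          rename_i u
          rw [dnCount_cons] at hpd
          have hql : q.length = k := by simpa using hpl
          have hnd : ¬ r u < r v := by by_contra hc; simp [hc] at hpd
          have hvu : r v < r u := by
            have : r v ≠ r u := fun hx => h.ne (hr hx)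
            omega
          exact Set.mem_biUnion ⟨h, hvu⟩ ⟨q, hql, by omega⟩
      refine le_trans (Set.ncard_le_ncard hsub (Set.toFinite _)) ?_
      refine le_trans (ncard_biUnion_le (Set.toFinite _) _ (fun u _ => ihk 0 u)) ?_
      have h1 := hup v
      have h2 : k.choose 0 * (d ^ (k - 0) * Δ ^ 0) = d ^ k := by simp
      have h3 : (k+1).choose 0 * (d ^ (k + 1 - 0) * Δ ^ 0) = d ^ (k+1) := by simp
      rw [h2, h3, pow_succ, mul_comm (d ^ k) d]
      exact Nat.mul_le_mul_right _ h1
    · obtain ⟨j', rfl⟩ : ∃ j', j = j' + 1 := ⟨j - 1, by omega⟩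
      have hsub : reachSet G r v (k + 1) (j' + 1) ⊆
          (⋃ u ∈ {w | G.Adj v w ∧ r v < r w}, reachSet G r u k (j' + 1)) ∪
          (⋃ u ∈ {w | G.Adj v w ∧ r w < r v}, reachSet G r u k j') := by
        rintro w ⟨p, hpl, hpd⟩
        cases p with
        | nil => simp at hpl
        | cons h q =>
          rename_i u
          rw [dnCount_cons] at hpd
          have hql : q.length = k := by simpa using hpl
          by_cases hdu : r u < r v
          · rw [if_pos hdu] at hpd
            exact Or.inr (Set.mem_biUnion ⟨h, hdu⟩ ⟨q, hql, by omega⟩)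
          · rw [if_neg hdu] at hpd
            have hvu : r v < r u := by
              have : r v ≠ r u := fun hx => h.ne (hr hx)
              omega
            exact Or.inl (Set.mem_biUnion ⟨h, hvu⟩ ⟨q, hql, by omega⟩)
      refine le_trans (Set.ncard_le_ncard hsub (Set.toFinite _)) ?_
      refine le_trans (Set.ncard_union_le _ _) ?_
      have hA := le_trans (ncard_biUnion_le (Set.toFinite _) _ (fun u _ => ihk (j' + 1) u))
        (Nat.mul_le_mul_right _ (hup v))
      have hB := le_trans (ncard_biUnion_le (Set.toFinite _) _ (fun u _ => ihk j' u))
        (Nat.mul_le_mul_right _ (hdn v))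
      refine le_trans (Nat.add_le_add hA hB) ?_
      rw [Nat.choose_succ_succ]
      -- target : d * (C(k,j'+1) * (d^(k-(j'+1)) * Δ^(j'+1))) + Δ * (C(k,j') * (d^(k-j') * Δ^j'))
      --          ≤ (C(k,j') + C(k,j'+1)) * (d^(k+1-(j'+1)) * Δ^(j'+1))
      have e1 : k + 1 - (j' + 1) = k - j' := by omega
      rw [e1]
      have hA2 : d * (k.choose (j' + 1) * (d ^ (k - (j' + 1)) * Δ ^ (j' + 1))) ≤
          k.choose (j' + 1) * (d ^ (k - j') * Δ ^ (j' + 1)) := by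
        rcases le_or_gt (j' + 1) k with hk | hk
        · have e2 : k - j' = (k - (j' + 1)) + 1 := by omega
          rw [e2, pow_succ]
          exact Nat.le_of_eq (by ring)
        · rw [Nat.choose_eq_zero_of_lt hk]
          simp
      have hB2 : Δ * (k.choose j' * (d ^ (k - j') * Δ ^ j')) =
          k.choose j' * (d ^ (k - j') * Δ ^ (j' + 1)) := by
        rw [pow_succ]
        ring
      rw [hB2] at *
      calc d * (k.choose (j' + 1) * (d ^ (k - (j' + 1)) * Δ ^ (j' + 1))) +
            k.choose j' * (d ^ (k - j') * Δ ^ (j' + 1))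
          ≤ k.choose (j' + 1) * (d ^ (k - j') * Δ ^ (j' + 1)) +
            k.choose j' * (d ^ (k - j') * Δ ^ (j' + 1)) := Nat.add_le_add_right hA2 _
        _ = (k.choose j' + k.choose (j' + 1)) * (d ^ (k - j') * Δ ^ (j' + 1)) := by ring

lemma sum_two_pow (n : ℕ) : ∑ k ∈ Finset.range n, 2 ^ k + 1 = 2 ^ n := by
  induction n with
  | zero => simp
  | succ n ihn => rw [Finset.sum_range_succ]; omega

lemma sum_choose_le (k m : ℕ) : ∑ j ∈ Finset.range m, k.choose j ≤ 2 ^ k := by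
  have h1 : ∑ j ∈ Finset.range m, k.choose j ≤ ∑ j ∈ Finset.range (max m (k + 1)), k.choose j :=
    Finset.sum_le_sum_of_subset (Finset.range_subset_range.2 (le_max_left _ _))
  have h2 : ∑ j ∈ Finset.range (max m (k + 1)), k.choose j =
      ∑ j ∈ Finset.range (k + 1), k.choose j := by
    refine (Finset.sum_subset (Finset.range_subset_range.2 (le_max_right _ _)) ?_).symm
    intro x _ hx
    simp only [Finset.mem_range, not_lt] at hx
    exact Nat.choose_eq_zero_of_lt (by omega)
  rw [h2, Nat.sum_range_choose] at h1
  exact h1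

end Aux

/-- For d ≥ 1, ℓ ≥ 2, Δ ≥ d and a d-degenerate graph G of maximum degree at most Δ, the
power graph G^ℓ has an orientation in which every vertex has out-degree at most
2^(ℓ+1)·d^⌈ℓ/2⌉·Δ^⌊ℓ/2⌋. -/
theorem stmt10 {V : Type*} [Fintype V] (G : SimpleGraph V) (d ℓ Δ : ℕ)
    (hd : 1 ≤ d) (hℓ : 2 ≤ ℓ) (hΔ : d ≤ Δ)
    (hdeg : IsDegenerate G d) (hmax : MaxDegreeLE G Δ) :
    ∃ o : V → V → Prop,
      (∀ v w, o v w → (powerGraph G ℓ).Adj v w) ∧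
      (∀ v w, (powerGraph G ℓ).Adj v w → (o v w ↔ ¬ o w v)) ∧
      (∀ v, {w | o v w}.ncard ≤ 2 ^ (ℓ + 1) * d ^ ((ℓ + 1) / 2) * Δ ^ (ℓ / 2)) := by
  obtain ⟨r, hr, hup⟩ := exists_rank hdeg
  have hdn : ∀ v, {w | G.Adj v w ∧ r w < r v}.ncard ≤ Δ := by
    intro v
    refine le_trans (Set.ncard_le_ncard ?_ (hmax v).1) (hmax v).2
    rintro w ⟨hadj, -⟩
    exact hadj
  -- `P v w` : there is a short walk from `v` to `w` with few down-steps
  set P : V → V → Prop := fun v w => ∃ q : G.Walk v w, q.length ≤ ℓ ∧ dnCount r q ≤ ℓ / 2 with hP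
  have hPor : ∀ v w, (powerGraph G ℓ).Adj v w → P v w ∨ P w v := by
    intro v w h
    obtain ⟨q, hq⟩ := exists_walk_of_adj h
    have hsum := dnCount_add_reverse r hr q
    by_cases hc : dnCount r q ≤ ℓ / 2
    · exact Or.inl ⟨q, hq, hc⟩
    · refine Or.inr ⟨q.reverse, by rwa [SimpleGraph.Walk.length_reverse], by omega⟩
  refine ⟨fun v w => (powerGraph G ℓ).Adj v w ∧ P v w ∧ (¬ P w v ∨ r v < r w),
    fun v w h => h.1, ?_, ?_⟩
  · intro v w h
    have hsym : (powerGraph G ℓ).Adj w v := h.symm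
    have hne : r v ≠ r w := fun hx => h.ne (hr hx)
    have hor := hPor v w h
    have htr : r v < r w ↔ ¬ r w < r v := by omega
    constructor
    · rintro ⟨-, hPvw, hx⟩ ⟨-, hPwv, hy⟩
      rcases hx with hx | hx
      · exact hx hPwv
      · rcases hy with hy | hy
        · exact hy hPvw
        · omega
    · intro hnot
      by_cases hPvw : P v w
      · refine ⟨h, hPvw, ?_⟩
        by_cases hPwv : P w v
        · refine Or.inr ?_
          rw [htr]
          intro hwv
          exact hnot ⟨hsym, hPwv, Or.inr hwv⟩
        · exact Or.inl hPwv
      · exfalso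
        rcases hor with hx | hx
        · exact hPvw hx
        · exact hnot ⟨hsym, hx, Or.inl hPvw⟩
  · intro v
    have hsub : {w | (powerGraph G ℓ).Adj v w ∧ P v w ∧ (¬ P w v ∨ r v < r w)} ⊆
        ⋃ k ∈ Finset.range (ℓ + 1), ⋃ j ∈ Finset.range (ℓ / 2 + 1), reachSet G r v k j := by
      rintro w ⟨-, ⟨q, hql, hqd⟩, -⟩
      refine Set.mem_iUnion.2 ⟨q.length, Set.mem_iUnion.2 ⟨Finset.mem_range.2 (by omega),
        Set.mem_iUnion.2 ⟨dnCount r q, Set.mem_iUnion.2 ⟨Finset.mem_range.2 (by omega),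
        ⟨q, rfl, rfl⟩⟩⟩⟩⟩
    refine le_trans (Set.ncard_le_ncard hsub (Set.toFinite _)) ?_
    refine le_trans (ncard_iUnion_range_le _ _) ?_
    have hstep : ∀ k ∈ Finset.range (ℓ + 1),
        (⋃ j ∈ Finset.range (ℓ / 2 + 1), reachSet G r v k j).ncard ≤
          2 ^ k * (d ^ ((ℓ + 1) / 2) * Δ ^ (ℓ / 2)) := by
      intro k hk
      rw [Finset.mem_range] at hk
      refine le_trans (ncard_iUnion_range_le _ _) ?_
      have hterm : ∀ j ∈ Finset.range (ℓ / 2 + 1),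
          (reachSet G r v k j).ncard ≤ k.choose j * (d ^ ((ℓ + 1) / 2) * Δ ^ (ℓ / 2)) := by
        intro j hj
        rw [Finset.mem_range] at hj
        refine le_trans (card_reachSet r hr hup hdn k j v) (Nat.mul_le_mul_left _ ?_)
        have e1 : ℓ - j = (ℓ + 1) / 2 + (ℓ / 2 - j) := by omega
        calc d ^ (k - j) * Δ ^ j ≤ d ^ (ℓ - j) * Δ ^ j :=
              Nat.mul_le_mul_right _ (Nat.pow_le_pow_right hd (by omega))
          _ = d ^ ((ℓ + 1) / 2) * (d ^ (ℓ / 2 - j) * Δ ^ j) := by rw [e1, pow_add, mul_assoc]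
          _ ≤ d ^ ((ℓ + 1) / 2) * (Δ ^ (ℓ / 2 - j) * Δ ^ j) :=
              Nat.mul_le_mul_left _ (Nat.mul_le_mul_right _ (Nat.pow_le_pow_left hΔ _))
          _ = d ^ ((ℓ + 1) / 2) * Δ ^ (ℓ / 2) := by
              rw [← pow_add]
              congr 2
              omega
      refine le_trans (Finset.sum_le_sum hterm) ?_
      rw [← Finset.sum_mul]
      exact Nat.mul_le_mul_right _ (sum_choose_le k _)
    refine le_trans (Finset.sum_le_sum hstep) ?_
    rw [← Finset.sum_mul, mul_assoc]
    refine Nat.mul_le_mul_right _ ?_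
    have := sum_two_pow (ℓ + 1)
    omega
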